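/- If A is a bounded abelian group, then the Jacobson radical of End(A) is closed in the finite topology on End(A). -/

import Mathlib

/-- The finite topology on the endomorphism ring of an abelian group: induced by the
inclusion into `A → A` where `A` carries the discrete topology. -/
def finTopEnd (A : Type*) [AddCommGroup A] : TopologicalSpace (AddMonoid.End A) :=
  TopologicalSpace.induced (fun f => (f : A → A))
    (@Pi.topologicalSpace A (fun _ => A) (fun _ => ⊥))

section RingLemmas

lemma left_inv_of_mem_jacobson {R : Type*} [Ring R] {x : R}
    (hx : x ∈ (⊥ : Ideal R).jacobson) : ∃ y, y * (1 - x) = 1 := by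
  by_contra h
  push_neg at h
  have hne : Ideal.span {1 - x} ≠ ⊤ := by
    intro htop
    have h1 : (1 : R) ∈ Ideal.span {1 - x} := htop ▸ Submodule.mem_top
    rw [Ideal.mem_span_singleton'] at h1
    obtain ⟨y, hy⟩ := h1
    exact h y hy
  obtain ⟨M, hM, hle⟩ := Ideal.exists_le_maximal _ hne
  have hxM : x ∈ M := by
    rw [Ideal.jacobson, Submodule.mem_sInf] at hx
    exact hx M ⟨bot_le, hM⟩
  have h1M : (1 : R) - x ∈ M := hle (Ideal.subset_span rfl)
  have : (1 : R) ∈ M := by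
    have := M.add_mem h1M hxM
    simpa using this
  exact hM.ne_top (Ideal.eq_top_of_isUnit_mem _ this isUnit_one)

lemma isUnit_one_sub_of_mem_jacobson {R : Type*} [Ring R] {x : R}
    (hx : x ∈ (⊥ : Ideal R).jacobson) : IsUnit (1 - x) := by
  obtain ⟨y, hy⟩ := left_inv_of_mem_jacobson hx
  have hyx : -(y * x) ∈ (⊥ : Ideal R).jacobson := by
    exact Submodule.neg_mem _ (Ideal.mul_mem_left _ y hx)
  obtain ⟨z, hz⟩ := left_inv_of_mem_jacobson hyx
  have hzy : z * y = 1 := by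
    have : (1 : R) - -(y * x) = y := by
      rw [sub_neg_eq_add]; have := hy; rw [mul_sub, mul_one] at this; rw [← this]; abel
    rwa [this] at hz
  have hz' : z = 1 - x := by
    calc z = z * (y * (1 - x)) := by rw [hy, mul_one]
    _ = (z * y) * (1 - x) := by rw [mul_assoc]
    _ = 1 - x := by rw [hzy, one_mul]
  refine isUnit_iff_exists.mpr ⟨y, ?_, ?_⟩
  · rw [← hz', hzy]
  · exact hy

end RingLemmas

section Kulikov

/-- If `S ≤ D`, `pS = 0`, and `S ∩ pD = 0` with `p` prime, then `S` is a direct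
summand of `D` (relative complement version). -/
lemma lemmaA {A : Type*} [AddCommGroup A] (p : ℕ) (hp : p.Prime)
    (S D : Submodule ℤ A) (hSD : S ≤ D)
    (hSpD : ∀ x ∈ S, ∀ d ∈ D, (p : ℤ) • d = x → x = 0) :
    ∃ E, E ≤ D ∧ S ⊓ E = ⊥ ∧ S ⊔ E = D := by
  classical
  set pD : Submodule ℤ A := D.map ((p : ℤ) • (LinearMap.id : A →ₗ[ℤ] A)) with hpD
  have hpD_le : pD ≤ D := by
    rintro x ⟨d, hd, rfl⟩
    exact D.smul_mem _ hd
  have hmem_pD : ∀ x, x ∈ pD ↔ ∃ d ∈ D, (p : ℤ) • d = x := by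
    intro x
    simp [hpD, Submodule.mem_map]
  set S₀ : Set (Submodule ℤ A) := {E | pD ≤ E ∧ E ≤ D ∧ S ⊓ E = ⊥} with hS₀
  have hpD_mem : pD ∈ S₀ := by
    refine ⟨le_rfl, hpD_le, ?_⟩
    rw [eq_bot_iff]
    rintro x ⟨hxS, hxpD⟩
    obtain ⟨d, hd, hdx⟩ := (hmem_pD x).mp hxpD
    simp [hSpD x hxS d hd hdx]
  obtain ⟨E, -, hEmax⟩ := zorn_le_nonempty₀ S₀ (fun c hc hchain y hy => by
    refine ⟨sSup c, ⟨?_, ?_, ?_⟩, fun z hz => le_sSup hz⟩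
    · exact le_trans (hc hy).1 (le_sSup hy)
    · exact sSup_le (fun z hz => (hc hz).2.1)
    · rw [eq_bot_iff]
      intro x hx
      rw [Submodule.mem_inf] at hx
      obtain ⟨hxS, hxsup⟩ := hx
      have hdir : DirectedOn (· ≤ ·) c := hchain.directedOn
      rw [Submodule.mem_sSup_of_directed ⟨y, hy⟩ hdir] at hxsup
      obtain ⟨z, hz, hxz⟩ := hxsup
      have := (hc hz).2.2
      have : x ∈ S ⊓ z := ⟨hxS, hxz⟩
      rw [(hc hz).2.2] at this
      exact this) pD hpD_mem
  obtain ⟨hpDE, hED, hSE⟩ := hEmax.1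
  refine ⟨E, hED, hSE, ?_⟩
  apply le_antisymm (sup_le hSD hED)
  intro d hd
  by_contra hdSE
  have hE' : E ⊔ Submodule.span ℤ {d} ∈ S₀ := by
    refine ⟨le_trans hpDE le_sup_left, sup_le hED ?_, ?_⟩
    · rw [Submodule.span_le, Set.singleton_subset_iff]; exact hd
    · rw [eq_bot_iff]
      intro s hs
      rw [Submodule.mem_inf] at hs
      obtain ⟨hsS, hsE'⟩ := hs
      rw [Submodule.mem_sup] at hsE'
      obtain ⟨e, he, z, hz, rfl⟩ := hsE'
      rw [Submodule.mem_span_singleton] at hz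
      obtain ⟨k, rfl⟩ := hz
      by_cases hpk : (p : ℤ) ∣ k
      · obtain ⟨k', rfl⟩ := hpk
        have hkd : ((p : ℤ) * k') • d ∈ E := by
          apply hpDE
          rw [hmem_pD]
          exact ⟨k' • d, D.smul_mem _ hd, by rw [smul_smul]⟩
        have : e + ((p : ℤ) * k') • d ∈ S ⊓ E := ⟨hsS, E.add_mem he hkd⟩
        rw [hSE] at this
        simpa using this
      · exfalso
        apply hdSE
        have hcop : IsCoprime (k : ℤ) (p : ℤ) := by
          rw [Int.isCoprime_iff_gcd_eq_one]
          have h1 : ¬ p ∣ k.natAbs := by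
            intro hdvd
            exact hpk (Int.natCast_dvd.mpr hdvd)
          have h2 := (Nat.Prime.coprime_iff_not_dvd hp).mpr h1
          rw [Int.gcd]
          simpa [Nat.coprime_comm] using h2
        obtain ⟨u, v, huv⟩ := hcop
        have hd_eq : d = u • (k • d) + v • ((p : ℤ) • d) := by
          rw [smul_smul, smul_smul, ← add_smul, huv, one_smul]
        rw [hd_eq]
        apply Submodule.add_mem
        · have hkdeq : k • d = (e + k • d) - e := by abel
          rw [hkdeq]
          exact Submodule.smul_mem _ _ (Submodule.sub_mem _
            (Submodule.mem_sup_left hsS) (Submodule.mem_sup_right he))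
        · apply Submodule.smul_mem
          apply Submodule.mem_sup_right
          apply hpDE
          rw [hmem_pD]
          exact ⟨d, hd, rfl⟩
  have heq : E ⊔ Submodule.span ℤ {d} = E := le_antisymm (hEmax.2 hE' le_sup_left) le_sup_left
  apply hdSE
  apply Submodule.mem_sup_right
  rw [← heq]
  exact Submodule.mem_sup_right (Submodule.mem_span_singleton_self d)

/-- Kulikov: a bounded pure submodule `B` of `T` has a complement within `T`. -/
lemma kulikov {A : Type*} [AddCommGroup A] (n : ℕ) (hn : 0 < n)
    (T B : Submodule ℤ A) (hBT : B ≤ T)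
    (hbd : ∀ b ∈ B, n • b = 0)
    (hpure : ∀ (m : ℕ), ∀ x ∈ B, (∃ a ∈ T, m • a = x) → ∃ b ∈ B, m • b = x) :
    ∃ E, E ≤ T ∧ B ⊓ E = ⊥ ∧ B ⊔ E = T := by
  induction n using Nat.strong_induction_on generalizing T B with
  | _ n IH =>
  rcases eq_or_lt_of_le (show 1 ≤ n from hn) with h1 | h1
  · -- n = 1 : B = ⊥
    have hB : B = ⊥ := by
      rw [eq_bot_iff]
      intro b hb
      have := hbd b hb
      rw [← h1] at this
      simp only [Nat.succ_eq_add_one, Nat.zero_add, one_smul] at this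
      simp [this]
    exact ⟨T, le_rfl, by simp [hB], by simp [hB]⟩
  · -- n > 1
    set p := n.minFac with hpdef
    have hp : p.Prime := Nat.minFac_prime (by omega)
    obtain ⟨m, hm⟩ : p ∣ n := n.minFac_dvd
    have hm1 : 0 < m := Nat.pos_of_ne_zero (by rintro rfl; rw [Nat.mul_zero] at hm; omega)
    have hmn : m < n := by
      have : 1 < p := hp.one_lt
      nlinarith
    set φ : A →ₗ[ℤ] A := (p : ℤ) • LinearMap.id with hφ
    have hφ_apply : ∀ x : A, φ x = p • x := by
      intro x; simp [hφ, natCast_zsmul]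
    set pT : Submodule ℤ A := T.map φ with hpT
    set pB : Submodule ℤ A := B.map φ with hpBdef
    have hmem_pT : ∀ x, x ∈ pT ↔ ∃ t ∈ T, p • t = x := by
      intro x; simp only [hpT, Submodule.mem_map]
      constructor
      · rintro ⟨t, ht, rfl⟩; exact ⟨t, ht, (hφ_apply t).symm⟩
      · rintro ⟨t, ht, h⟩; exact ⟨t, ht, by rw [hφ_apply, h]⟩
    have hmem_pB : ∀ x, x ∈ pB ↔ ∃ b ∈ B, p • b = x := by
      intro x; simp only [hpBdef, Submodule.mem_map]
      constructor
      · rintro ⟨t, ht, rfl⟩; exact ⟨t, ht, (hφ_apply t).symm⟩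
      · rintro ⟨t, ht, h⟩; exact ⟨t, ht, by rw [hφ_apply, h]⟩
    have hpB_le_B : pB ≤ B := by
      rintro x hx
      obtain ⟨b, hb, rfl⟩ := (hmem_pB x).mp hx
      exact nsmul_mem hb p
    have hpB_le_pT : pB ≤ pT := by
      intro x hx
      obtain ⟨b, hb, hbx⟩ := (hmem_pB x).mp hx
      exact (hmem_pT x).mpr ⟨b, hBT hb, hbx⟩
    have hbd' : ∀ b ∈ pB, m • b = 0 := by
      intro b hb
      obtain ⟨b₀, hb₀, rfl⟩ := (hmem_pB b).mp hb
      rw [smul_smul, Nat.mul_comm, ← hm]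
      exact hbd b₀ hb₀
    have hpure' : ∀ (m' : ℕ), ∀ x ∈ pB, (∃ a ∈ pT, m' • a = x) → ∃ b ∈ pB, m' • b = x := by
      intro m' x hx ⟨a, ha, hax⟩
      obtain ⟨t, ht, rfl⟩ := (hmem_pT a).mp ha
      have hxB : x ∈ B := hpB_le_B hx
      have : ∃ b ∈ B, (m' * p) • b = x := by
        apply hpure _ _ hxB
        exact ⟨t, ht, by rw [← hax, smul_smul]⟩
      obtain ⟨b, hb, hbx⟩ := this
      refine ⟨p • b, (hmem_pB _).mpr ⟨b, hb, rfl⟩, ?_⟩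
      rw [smul_smul, hbx]
    obtain ⟨C, hCpT, hpBC, hpBCsup⟩ := IH m hmn hm1 pT pB hpB_le_pT hbd' hpure'
    -- D = {a ∈ T : p • a ∈ C}
    set D : Submodule ℤ A := T ⊓ Submodule.comap φ C with hD
    have hmem_D : ∀ x, x ∈ D ↔ x ∈ T ∧ p • x ∈ C := by
      intro x
      simp only [hD, Submodule.mem_inf, Submodule.mem_comap, hφ_apply]
    have hDT : D ≤ T := inf_le_left
    -- S = B[p] = B ⊓ ker φ
    set S : Submodule ℤ A := B ⊓ LinearMap.ker φ with hS
    have hmem_S : ∀ x, x ∈ S ↔ x ∈ B ∧ p • x = 0 := by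
      intro x
      simp only [hS, Submodule.mem_inf, LinearMap.mem_ker, hφ_apply]
    -- B ⊓ D = S
    have hBD : ∀ x, x ∈ B → x ∈ D → x ∈ S := by
      intro x hxB hxD
      rw [hmem_D] at hxD
      have : p • x ∈ pB ⊓ C := ⟨(hmem_pB _).mpr ⟨x, hxB, rfl⟩, hxD.2⟩
      rw [hpBC] at this
      exact (hmem_S x).mpr ⟨hxB, by simpa using this⟩
    have hSD : S ≤ D := by
      intro x hx
      rw [hmem_S] at hx
      rw [hmem_D]
      exact ⟨hBT hx.1, by rw [hx.2]; exact C.zero_mem⟩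
    -- T = B ⊔ D
    have hTBD : T ≤ B ⊔ D := by
      intro t ht
      have : p • t ∈ pT := (hmem_pT _).mpr ⟨t, ht, rfl⟩
      rw [← hpBCsup, Submodule.mem_sup] at this
      obtain ⟨y, hy, c, hc, hyc⟩ := this
      obtain ⟨b, hb, rfl⟩ := (hmem_pB y).mp hy
      have htb : t - b ∈ D := by
        rw [hmem_D]
        refine ⟨T.sub_mem ht (hBT hb), ?_⟩
        have : p • (t - b) = c := by
          rw [smul_sub, ← hyc]; abel
        rw [this]; exact hc
      have : t = b + (t - b) := by abel
      rw [this]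
      exact Submodule.add_mem _ (Submodule.mem_sup_left hb) (Submodule.mem_sup_right htb)
    -- apply lemmaA to S ≤ D
    obtain ⟨E, hED, hSE, hSEsup⟩ := lemmaA p hp S D hSD (by
      intro x hx d hd hdx
      rw [hmem_S] at hx
      rw [natCast_zsmul] at hdx
      have hxC : x ∈ C := by
        rw [← hdx]
        exact ((hmem_D d).mp hd).2
      have hxpB : x ∈ pB := by
        obtain ⟨b, hb, hbx⟩ := hpure p x hx.1 ⟨d, hDT hd, hdx⟩
        exact (hmem_pB x).mpr ⟨b, hb, hbx⟩
      have : x ∈ pB ⊓ C := ⟨hxpB, hxC⟩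
      rw [hpBC] at this
      simpa using this)
    -- final: E is the complement of B in T
    refine ⟨E, le_trans hED hDT, ?_, ?_⟩
    · rw [eq_bot_iff]
      intro x hx
      rw [Submodule.mem_inf] at hx
      have hxS : x ∈ S := hBD x hx.1 (hED hx.2)
      have : x ∈ S ⊓ E := ⟨hxS, hx.2⟩
      rw [hSE] at this
      exact this
    · apply le_antisymm (sup_le hBT (le_trans hED hDT))
      intro t ht
      have := hTBD ht
      rw [Submodule.mem_sup] at this
      obtain ⟨b, hb, d, hd, rfl⟩ := this
      refine Submodule.add_mem _ (Submodule.mem_sup_left hb) ?_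
      rw [← hSEsup, Submodule.mem_sup] at hd
      obtain ⟨s, hs, e, he, rfl⟩ := hd
      exact Submodule.add_mem _ (Submodule.mem_sup_left (((hmem_S s).mp hs).1))
        (Submodule.mem_sup_right he)

end Kulikov

section Topology

variable {A : Type*} [AddCommGroup A]

lemma mem_closure_finTopEnd {S : Set (AddMonoid.End A)} {f : AddMonoid.End A} :
    f ∈ @closure _ (finTopEnd A) S ↔
      ∀ s : Finset A, ∃ g ∈ S, ∀ a ∈ s, g a = f a := by
  letI : TopologicalSpace A := ⊥
  haveI : DiscreteTopology A := ⟨rfl⟩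
  letI : TopologicalSpace (AddMonoid.End A) := finTopEnd A
  rw [mem_closure_iff]
  constructor
  · intro h s
    have hopen : IsOpen {g : AddMonoid.End A | ∀ a ∈ s, g a = f a} := by
      have he : {g : AddMonoid.End A | ∀ a ∈ s, g a = f a}
          = (fun g : AddMonoid.End A => (g : A → A)) ⁻¹' (Set.pi ↑s fun a => {f a}) := by
        ext g
        simp [Set.mem_pi]
      rw [he]
      exact (isOpen_set_pi s.finite_toSet fun a _ => isOpen_discrete _).preimage
        continuous_induced_dom
    obtain ⟨g, hg1, hg2⟩ := h _ hopen (fun a _ => rfl)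
    exact ⟨g, hg2, hg1⟩
  · intro h o ho hfo
    obtain ⟨t, ht, rfl⟩ := isOpen_induced_iff.mp ho
    rw [isOpen_pi_iff] at ht
    obtain ⟨I, u, hu, hsub⟩ := ht (f : A → A) hfo
    obtain ⟨g, hgS, hg⟩ := h I
    refine ⟨g, ?_, hgS⟩
    apply hsub
    intro a ha
    show g a ∈ u a
    rw [hg a ha]
    exact (hu a ha).2

end Topology

theorem jacobson_closed_of_bounded {A : Type*} [AddCommGroup A]
    (n : ℕ) (hn : 0 < n) (hbound : ∀ a : A, n • a = 0) :
    @IsClosed _ (finTopEnd A)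
      ((⊥ : Ideal (AddMonoid.End A)).jacobson : Set (AddMonoid.End A)) := by
  classical
  letI : TopologicalSpace (AddMonoid.End A) := finTopEnd A
  set J : Ideal (AddMonoid.End A) := (⊥ : Ideal (AddMonoid.End A)).jacobson with hJ
  -- closure of J is stable under left multiplication
  have hCmul : ∀ (h f : AddMonoid.End A), f ∈ closure (J : Set (AddMonoid.End A)) →
      h * f ∈ closure (J : Set (AddMonoid.End A)) := by
    intro h f hf
    rw [mem_closure_finTopEnd] at hf ⊢
    intro s
    obtain ⟨g, hgJ, hg⟩ := hf s
    refine ⟨h * g, ?_, fun a ha => ?_⟩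
    · have := J.smul_mem h hgJ
      simpa [smul_eq_mul] using this
    · show h (g a) = h (f a)
      rw [hg a ha]
  -- injectivity lemma
  have hinj : ∀ f : AddMonoid.End A, f ∈ closure (J : Set (AddMonoid.End A)) →
      ∀ a : A, a - f a = 0 → a = 0 := by
    intro f hf a ha
    obtain ⟨g, hgJ, hg⟩ := mem_closure_finTopEnd.mp hf {a}
    have hga : a - g a = 0 := by
      rw [hg a (Finset.mem_singleton_self a)]; exact ha
    obtain ⟨u, hu⟩ := isUnit_one_sub_of_mem_jacobson hgJ
    have h1 : (↑u : AddMonoid.End A) a = 0 := by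
      rw [hu]; show a - g a = 0; exact hga
    have h2 : a = (↑u⁻¹ * ↑u : AddMonoid.End A) a := by rw [u.inv_mul]; rfl
    rw [h2]
    show (↑u⁻¹ : AddMonoid.End A) ((↑u : AddMonoid.End A) a) = 0
    rw [h1, map_zero]
  -- surjectivity lemma
  have hsurj : ∀ f : AddMonoid.End A, f ∈ closure (J : Set (AddMonoid.End A)) →
      ∀ y : A, ∃ a, a - f a = y := by
    intro f hf
    set B : Submodule ℤ A :=
      LinearMap.range (((1 - f : AddMonoid.End A) : A →+ A).toIntLinearMap) with hB
    have hmemB : ∀ x, x ∈ B ↔ ∃ a : A, a - f a = x := by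
      intro x
      constructor
      · rintro ⟨a, rfl⟩; exact ⟨a, rfl⟩
      · rintro ⟨a, rfl⟩; exact ⟨a, rfl⟩
    have hpure : ∀ (m : ℕ), ∀ x ∈ B, (∃ a ∈ (⊤ : Submodule ℤ A), m • a = x) →
        ∃ b ∈ B, m • b = x := by
      rintro m x hx ⟨a', -, ha'⟩
      obtain ⟨a, hax⟩ := (hmemB x).mp hx
      obtain ⟨g, hgJ, hg⟩ := mem_closure_finTopEnd.mp hf {a}
      obtain ⟨u, hu⟩ := isUnit_one_sub_of_mem_jacobson hgJ
      have hga : (↑u : AddMonoid.End A) a = m • a' := by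
        rw [hu]
        show a - g a = m • a'
        rw [hg a (Finset.mem_singleton_self a), hax, ha']
      set c := (↑u⁻¹ : AddMonoid.End A) a' with hc
      have hac : a = m • c := by
        have h2 : a = (↑u⁻¹ * ↑u : AddMonoid.End A) a := by rw [u.inv_mul]; rfl
        rw [h2]
        show (↑u⁻¹ : AddMonoid.End A) ((↑u : AddMonoid.End A) a) = m • c
        rw [hga, hc, map_nsmul]
      refine ⟨c - f c, (hmemB _).mpr ⟨c, rfl⟩, ?_⟩
      have h3 : m • (c - f c) = (m • c) - f (m • c) := by
        rw [smul_sub, map_nsmul]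
      rw [h3, ← hac, hax]
    have hbd : ∀ b ∈ B, n • b = 0 := fun b _ => hbound b
    obtain ⟨E, -, hBE, hBEsup⟩ := kulikov n hn ⊤ B le_top hbd hpure
    have hcompl : IsCompl B E := ⟨disjoint_iff.mpr hBE, codisjoint_iff.mpr hBEsup⟩
    set π0 := E.linearProjOfIsCompl B hcompl.symm with hπ0
    set π : AddMonoid.End A := ((E.subtype.comp π0).toAddMonoidHom : A →+ A) with hπ
    have hπB : ∀ x, x ∈ B → π x = 0 := by
      intro x hx
      show E.subtype (π0 x) = 0
      have h0 := Submodule.linearProjOfIsCompl_apply_right hcompl.symm ⟨x, hx⟩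
      have h0' : π0 x = 0 := h0
      rw [h0', map_zero]
    have hπE : ∀ x, x ∈ E → π x = x := by
      intro x hx
      show E.subtype (π0 x) = x
      have h0 := Submodule.linearProjOfIsCompl_apply_left hcompl.symm ⟨x, hx⟩
      have h0' : π0 x = ⟨x, hx⟩ := h0
      rw [h0']
      rfl
    have hEbot : E = ⊥ := by
      rw [eq_bot_iff]
      intro e he
      have h1 : e - (π * f) e = 0 := by
        show e - π (f e) = 0
        have h2 : f e = e - (e - f e) := by abel
        have h3 : π (e - f e) = 0 := hπB _ ((hmemB _).mpr ⟨e, rfl⟩)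
        rw [h2, map_sub, h3, hπE e he]
        abel
      have := hinj _ (hCmul π f hf) e h1
      simp [this]
    have hBtop : B = ⊤ := by
      rw [hEbot, sup_bot_eq] at hBEsup
      exact hBEsup
    intro y
    exact (hmemB y).mp (hBtop ▸ Submodule.mem_top)
  -- every 1 - f for f in the closure is a unit
  have hunit : ∀ f : AddMonoid.End A, f ∈ closure (J : Set (AddMonoid.End A)) →
      IsUnit ((1 : AddMonoid.End A) - f) := by
    intro f hf
    have hbij : Function.Bijective ((1 - f : AddMonoid.End A) : A → A) := by
      constructor
      · intro a b hab
        have hab' : a - f a = b - f b := hab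
        have h1 : (a - b) - f (a - b) = 0 := by
          rw [map_sub]
          rw [sub_eq_zero]
          rw [sub_eq_sub_iff_sub_eq_sub] at hab'
          rw [hab']
        have := hinj f hf (a - b) h1
        exact sub_eq_zero.mp this
      · intro y
        obtain ⟨a, ha⟩ := hsurj f hf y
        exact ⟨a, ha⟩
    let e := AddEquiv.ofBijective ((1 - f : AddMonoid.End A) : A →+ A) hbij
    refine ⟨⟨1 - f, ((e.symm : A ≃+ A) : A →+ A), ?_, ?_⟩, rfl⟩
    · refine AddMonoidHom.ext fun a => ?_
      show (1 - f : AddMonoid.End A) (e.symm a) = a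
      exact e.apply_symm_apply a
    · refine AddMonoidHom.ext fun a => ?_
      show e.symm ((1 - f : AddMonoid.End A) a) = a
      exact e.symm_apply_apply a
  -- conclude
  apply isClosed_of_closure_subset
  intro f hf
  show f ∈ J
  rw [hJ, Ideal.jacobson]
  rw [Submodule.mem_sInf]
  rintro M ⟨-, hMmax⟩
  by_contra hfM
  have hlt : M < M ⊔ Ideal.span {f} := by
    refine lt_of_le_of_ne le_sup_left (fun hMeq => ?_)
    apply hfM
    rw [hMeq]
    exact Submodule.mem_sup_right (Ideal.subset_span rfl)
  have htop : M ⊔ Ideal.span {f} = ⊤ := hMmax.1.2 _ hlt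
  have h1 : (1 : AddMonoid.End A) ∈ M ⊔ Ideal.span {f} := htop ▸ Submodule.mem_top
  rw [Submodule.mem_sup] at h1
  obtain ⟨y, hy, z, hz, hyz⟩ := h1
  obtain ⟨h, rfl⟩ : ∃ h : AddMonoid.End A, h • f = z := Submodule.mem_span_singleton.mp hz
  have hyeq : y = 1 - h * f := by
    rw [← hyz, smul_eq_mul]; abel
  have hunit_y : IsUnit y := by
    rw [hyeq]
    exact hunit _ (hCmul h f hf)
  exact hMmax.1.1 (Ideal.eq_top_of_isUnit_mem _ hy hunit_y)
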